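/- For every integer n ≥ 2, every weakly connected T_n-free digraph D whose underlying graph G_D is {K_{1,n}, P_n}-free has at most (R(2^{n−1}−1, n) − 1)^{n−2} vertices, and consequently cp(D) ≤ (R(2^{n−1}−1, n) − 1)^{n−2}, where R denotes the Ramsey number. -/

import Mathlib

/-! ## Basic notions for graphs and digraphs

A digraph on a vertex type `V` is given by its arc relation `E : V → V → Prop`.
Simplicity and absence of 2-cycles is expressed by the hypothesis
`∀ u v, E u v → ¬ E v u`.  The underlying graph `G_D` is `SimpleGraph.fromRel E`. -/

/-- `G` contains an induced copy of the simple graph `H`. -/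
def HasInducedCopyG {W V : Type} (H : SimpleGraph W) (G : SimpleGraph V) : Prop :=
  ∃ f : W → V, Function.Injective f ∧ ∀ a b : W, G.Adj (f a) (f b) ↔ H.Adj a b

/-- The digraph `E` contains an induced copy of the digraph `H`. -/
def DigraphHasInducedCopy {W V : Type} (H : W → W → Prop) (E : V → V → Prop) : Prop :=
  ∃ f : W → V, Function.Injective f ∧ ∀ a b : W, E (f a) (f b) ↔ H a b

/-- The star `K_{1,n}` with one center and `n` leaves. -/
def StarG (n : ℕ) : SimpleGraph (Unit ⊕ Fin n) :=
  SimpleGraph.fromRel (fun a b =>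
    match a, b with
    | Sum.inl _, Sum.inr _ => True
    | _, _ => False)

/-- The path `P_n` of order `n`. -/
def PathG (n : ℕ) : SimpleGraph (Fin n) :=
  SimpleGraph.fromRel (fun i j => i.val + 1 = j.val)

/-- The graph `K*_n`: a complete graph on the `x_i` together with pendant edges `x_i y_i`. -/
def KStarG (n : ℕ) : SimpleGraph (Fin n ⊕ Fin n) :=
  SimpleGraph.fromRel (fun a b =>
    match a, b with
    | Sum.inl i, Sum.inl j => i ≠ j
    | Sum.inl i, Sum.inr j => i = j
    | _, _ => False)

/-- The graph `F^(1)_n` on `{x₁,x₂} ∪ {yᵢ} ∪ {zᵢ}`: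
edges `x₁x₂, x₁y₁, x₁z₁` together with the two paths `y₁⋯y_n` and `z₁⋯z_n`. -/
def F1G (n : ℕ) : SimpleGraph (Fin 2 ⊕ Fin n ⊕ Fin n) :=
  SimpleGraph.fromRel (fun a b =>
    match a, b with
    | Sum.inl i, Sum.inl j => i.val = 0 ∧ j.val = 1
    | Sum.inl i, Sum.inr (Sum.inl j) => i.val = 0 ∧ j.val = 0
    | Sum.inl i, Sum.inr (Sum.inr j) => i.val = 0 ∧ j.val = 0
    | Sum.inr (Sum.inl i), Sum.inr (Sum.inl j) => i.val + 1 = j.val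
    | Sum.inr (Sum.inr i), Sum.inr (Sum.inr j) => i.val + 1 = j.val
    | _, _ => False)

/-- The single edge `y₁z₁` (used to build `F^(2)_n` and `F^(4)_n`). -/
def YZEdgeG (n : ℕ) : SimpleGraph (Fin 2 ⊕ Fin n ⊕ Fin n) :=
  SimpleGraph.fromRel (fun a b =>
    match a, b with
    | Sum.inr (Sum.inl i), Sum.inr (Sum.inr j) => i.val = 0 ∧ j.val = 0
    | _, _ => False)

/-- `F^(2)_n = F^(1)_n + y₁z₁`. -/
def F2G (n : ℕ) : SimpleGraph (Fin 2 ⊕ Fin n ⊕ Fin n) := F1G n ⊔ YZEdgeG n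

/-- The graph `F^(3)_n`: edges `x₁y₁, x₁z₁, x₂y₁, x₂z₁` together with the two paths. -/
def F3G (n : ℕ) : SimpleGraph (Fin 2 ⊕ Fin n ⊕ Fin n) :=
  SimpleGraph.fromRel (fun a b =>
    match a, b with
    | Sum.inl _, Sum.inr (Sum.inl j) => j.val = 0
    | Sum.inl _, Sum.inr (Sum.inr j) => j.val = 0
    | Sum.inr (Sum.inl i), Sum.inr (Sum.inl j) => i.val + 1 = j.val
    | Sum.inr (Sum.inr i), Sum.inr (Sum.inr j) => i.val + 1 = j.val
    | _, _ => False)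

/-- `F^(4)_n = F^(3)_n + y₁z₁`. -/
def F4G (n : ℕ) : SimpleGraph (Fin 2 ⊕ Fin n ⊕ Fin n) := F3G n ⊔ YZEdgeG n

/-- The digraph `D^(1)_n` on `{x₁} ∪ {yᵢ} ∪ {zᵢ}` with arcs
`(x₁,y₁), (z₁,x₁), (y₁,z₁)`, `(y_{i+1}, y_i)` and `(z_i, z_{i+1})`. -/
def D1Rel (n : ℕ) : (Unit ⊕ Fin n ⊕ Fin n) → (Unit ⊕ Fin n ⊕ Fin n) → Prop := fun a b =>
  match a, b with
  | Sum.inl _, Sum.inr (Sum.inl j) => j.val = 0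
  | Sum.inr (Sum.inr i), Sum.inl _ => i.val = 0
  | Sum.inr (Sum.inl i), Sum.inr (Sum.inr j) => i.val = 0 ∧ j.val = 0
  | Sum.inr (Sum.inl i), Sum.inr (Sum.inl j) => j.val + 1 = i.val
  | Sum.inr (Sum.inr i), Sum.inr (Sum.inr j) => i.val + 1 = j.val
  | _, _ => False

/-- `D^(2)_n`: obtained from `D^(1)_n` by replacing the arc `(z₁,x₁)` by `(x₁,z₁)`. -/
def D2Rel (n : ℕ) : (Unit ⊕ Fin n ⊕ Fin n) → (Unit ⊕ Fin n ⊕ Fin n) → Prop := fun a b =>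
  match a, b with
  | Sum.inl _, Sum.inr (Sum.inl j) => j.val = 0
  | Sum.inl _, Sum.inr (Sum.inr j) => j.val = 0
  | Sum.inr (Sum.inl i), Sum.inr (Sum.inr j) => i.val = 0 ∧ j.val = 0
  | Sum.inr (Sum.inl i), Sum.inr (Sum.inl j) => j.val + 1 = i.val
  | Sum.inr (Sum.inr i), Sum.inr (Sum.inr j) => i.val + 1 = j.val
  | _, _ => False

/-- `D^(3)_n`: obtained from `D^(1)_n` by replacing the arc `(x₁,y₁)` by `(y₁,x₁)`. -/
def D3Rel (n : ℕ) : (Unit ⊕ Fin n ⊕ Fin n) → (Unit ⊕ Fin n ⊕ Fin n) → Prop := fun a b =>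
  match a, b with
  | Sum.inr (Sum.inl i), Sum.inl _ => i.val = 0
  | Sum.inr (Sum.inr i), Sum.inl _ => i.val = 0
  | Sum.inr (Sum.inl i), Sum.inr (Sum.inr j) => i.val = 0 ∧ j.val = 0
  | Sum.inr (Sum.inl i), Sum.inr (Sum.inl j) => j.val + 1 = i.val
  | Sum.inr (Sum.inr i), Sum.inr (Sum.inr j) => i.val + 1 = j.val
  | _, _ => False

/-- The transitive tournament `T_n`. -/
def TRel (n : ℕ) : Fin n → Fin n → Prop := fun i j => i < j

/-- A (nonempty) directed path in the digraph `E`, recorded as its list of vertices. -/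
def IsDirPathList {V : Type} (E : V → V → Prop) (l : List V) : Prop :=
  l ≠ [] ∧ l.Nodup ∧ l.Chain' E

/-- The path cover number of the subdigraph of `E` induced by `X`:
the minimum number of directed paths of `E[X]` whose vertex sets cover `X`. -/
noncomputable def pcOn {V : Type} (E : V → V → Prop) (X : Set V) : ℕ :=
  sInf {k | ∃ P : Finset (List V), P.card = k ∧
    (∀ l ∈ P, IsDirPathList E l ∧ ∀ v ∈ l, v ∈ X) ∧
    ∀ v ∈ X, ∃ l ∈ P, v ∈ l}

/-- The path partition number of the subdigraph of `E` induced by `X`: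
the minimum number of pairwise vertex-disjoint directed paths of `E[X]`
whose vertex sets partition `X`. -/
noncomputable def ppOn {V : Type} (E : V → V → Prop) (X : Set V) : ℕ :=
  sInf {k | ∃ P : Finset (List V), P.card = k ∧
    (∀ l ∈ P, IsDirPathList E l ∧ ∀ v ∈ l, v ∈ X) ∧
    (∀ v ∈ X, ∃ l ∈ P, v ∈ l) ∧
    ∀ l ∈ P, ∀ l' ∈ P, l ≠ l' → ∀ v ∈ l, v ∉ l'}

/-- A (nonempty) path in the simple graph `G`, recorded as its list of vertices. -/
def IsPathList {V : Type} (G : SimpleGraph V) (l : List V) : Prop :=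
  l ≠ [] ∧ l.Nodup ∧ l.Chain' G.Adj

/-- The path cover number `pc(G)` of a simple graph `G`. -/
noncomputable def pcG {V : Type} (G : SimpleGraph V) : ℕ :=
  sInf {k | ∃ P : Finset (List V), P.card = k ∧
    (∀ l ∈ P, IsPathList G l) ∧ ∀ v : V, ∃ l ∈ P, v ∈ l}

/-- The path partition number `pp(G)` of a simple graph `G`. -/
noncomputable def ppG {V : Type} (G : SimpleGraph V) : ℕ :=
  sInf {k | ∃ P : Finset (List V), P.card = k ∧
    (∀ l ∈ P, IsPathList G l) ∧ (∀ v : V, ∃ l ∈ P, v ∈ l) ∧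
    ∀ l ∈ P, ∀ l' ∈ P, l ≠ l' → ∀ v ∈ l, v ∉ l'}

/-- A directed cycle in the digraph `E`, recorded as its list of vertices. -/
def IsDirCycleList {V : Type} (E : V → V → Prop) (l : List V) : Prop :=
  ∃ h : l ≠ [], 3 ≤ l.length ∧ l.Nodup ∧ l.Chain' E ∧ E (l.getLast h) (l.head h)

/-- A member of a cycle cover/partition: a directed cycle, or a weakly connected
subdigraph of order at most two. -/
def IsCyclePartMember {V : Type} (E : V → V → Prop) (l : List V) : Prop :=
  IsDirCycleList E l ∨
    (l ≠ [] ∧ l.length ≤ 2 ∧ l.Nodup ∧ l.Chain' (fun a b => E a b ∨ E b a))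

/-- The cycle partition number `cp(D)` of the digraph `E`. -/
noncomputable def cpNum {V : Type} (E : V → V → Prop) : ℕ :=
  sInf {k | ∃ P : Finset (List V), P.card = k ∧
    (∀ l ∈ P, IsCyclePartMember E l) ∧
    (∀ v : V, ∃ l ∈ P, v ∈ l) ∧
    ∀ l ∈ P, ∀ l' ∈ P, l ≠ l' → ∀ v ∈ l, v ∉ l'}

/-- `v : Fin m → V` enumerates an induced path of the simple graph `G`. -/
def IsInducedPathEmb {V : Type} (G : SimpleGraph V) {m : ℕ} (v : Fin m → V) : Prop :=
  Function.Injective v ∧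
    ∀ i j : Fin m, G.Adj (v i) (v j) ↔ (i.val + 1 = j.val ∨ j.val + 1 = i.val)

/-- `w : Fin m → V` enumerates an induced pseudo-path of the digraph `E`:
the induced subdigraph on its image has a path as underlying graph. -/
def IsInducedPsPath {V : Type} (E : V → V → Prop) {m : ℕ} (w : Fin m → V) : Prop :=
  Function.Injective w ∧
    ∀ i j : Fin m, (E (w i) (w j) ∨ E (w j) (w i)) ↔ (i.val + 1 = j.val ∨ j.val + 1 = i.val)

/-- `r(P)` for a pseudo-path enumerated by `w`: the number of (internal) vertices
having out-degree 2 or in-degree 2 in the pseudo-path. -/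
noncomputable def turnCount {V : Type} (E : V → V → Prop) {m : ℕ} (w : Fin m → V) : ℕ :=
  Set.ncard {i : Fin m | ∃ j k : Fin m, j.val + 1 = i.val ∧ i.val + 1 = k.val ∧
    ((E (w i) (w j) ∧ E (w i) (w k)) ∨ (E (w j) (w i) ∧ E (w k) (w i)))}

/-- Condition (D1): the underlying graph of `E` is `{K*_n, K_{1,n}, F^(1)_n, F^(2)_n}`-free. -/
def CondD1 {V : Type} (n : ℕ) (E : V → V → Prop) : Prop :=
  ¬ HasInducedCopyG (KStarG n) (SimpleGraph.fromRel E) ∧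
  ¬ HasInducedCopyG (StarG n) (SimpleGraph.fromRel E) ∧
  ¬ HasInducedCopyG (F1G n) (SimpleGraph.fromRel E) ∧
  ¬ HasInducedCopyG (F2G n) (SimpleGraph.fromRel E)

/-- Condition (D'1): the underlying graph of `E` is
`{K*_n, K_{1,n}, F^(1)_n, F^(2)_n, F^(3)_n, F^(4)_n}`-free. -/
def CondD1' {V : Type} (n : ℕ) (E : V → V → Prop) : Prop :=
  CondD1 n E ∧
  ¬ HasInducedCopyG (F3G n) (SimpleGraph.fromRel E) ∧
  ¬ HasInducedCopyG (F4G n) (SimpleGraph.fromRel E)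

/-- Condition (D2): `E` is `{D^(1)_n, D^(2)_n, D^(3)_n}`-free. -/
def CondD2 {V : Type} (n : ℕ) (E : V → V → Prop) : Prop :=
  ¬ DigraphHasInducedCopy (D1Rel n) E ∧
  ¬ DigraphHasInducedCopy (D2Rel n) E ∧
  ¬ DigraphHasInducedCopy (D3Rel n) E

/-- Condition (D3): `r(P) ≤ n` for every induced pseudo-path `P` of `E`. -/
def CondD3 {V : Type} (n : ℕ) (E : V → V → Prop) : Prop :=
  ∀ (m : ℕ) (w : Fin m → V), IsInducedPsPath E w → turnCount E w ≤ n

/-- The Ramsey number `R(a, b)`: the least `R` such that every graph on at least `R`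
vertices contains a clique of size `a` or an independent set of size `b`. -/
noncomputable def ramseyNumber (a b : ℕ) : ℕ :=
  sInf {R | ∀ m : ℕ, R ≤ m → ∀ G : SimpleGraph (Fin m),
    (∃ s : Finset (Fin m), G.IsNClique a s) ∨ (∃ s : Finset (Fin m), Gᶜ.IsNClique b s)}

/-- The independence number of the subgraph of `G` induced by `X`. -/
noncomputable def indepNumOn {V : Type} (G : SimpleGraph V) (X : Set V) : ℕ :=
  sSup {k | ∃ s : Finset V, ↑s ⊆ X ∧ s.card = k ∧ ∀ a ∈ s, ∀ b ∈ s, a ≠ b → ¬ G.Adj a b}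

/-- The independence number `α(G)`. -/
noncomputable def indepNum {V : Type} (G : SimpleGraph V) : ℕ := indepNumOn G Set.univ

/-- The neighborhood `N_G(X)` of a set of vertices. -/
def nbhd {V : Type} (G : SimpleGraph V) (X : Set V) : Set V :=
  {v | v ∉ X ∧ ∃ x ∈ X, G.Adj v x}

/-! ### Auxiliary lemmas -/

open Finset

section AuxLemmas

lemma aux_comap_clique {V : Type} [DecidableEq V] {A : Finset V} {G : SimpleGraph V} {k : ℕ}
    {s : Finset {x // x ∈ A}} (h : (G.comap (Subtype.val : {x // x ∈ A} → V)).IsNClique k s) :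
    G.IsNClique k (s.image Subtype.val) := by
  classical
  constructor
  · rintro x hx y hy hxy
    simp only [coe_image, Set.mem_image, mem_coe] at hx hy
    obtain ⟨x', hx', rfl⟩ := hx
    obtain ⟨y', hy', rfl⟩ := hy
    exact h.1 hx' hy' (fun hh => hxy (by rw [hh]))
  · rw [Finset.card_image_of_injective _ Subtype.val_injective]; exact h.2

lemma aux_comap_coclique {V : Type} [DecidableEq V] {A : Finset V} {G : SimpleGraph V} {k : ℕ}
    {s : Finset {x // x ∈ A}} (h : (G.comap (Subtype.val : {x // x ∈ A} → V))ᶜ.IsNClique k s) :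
    Gᶜ.IsNClique k (s.image Subtype.val) := by
  classical
  constructor
  · rintro x hx y hy hxy
    simp only [coe_image, Set.mem_image, mem_coe] at hx hy
    obtain ⟨x', hx', rfl⟩ := hx
    obtain ⟨y', hy', rfl⟩ := hy
    have h' := h.1 hx' hy' (fun hh => hxy (by rw [hh]))
    simp only [SimpleGraph.compl_adj, SimpleGraph.comap_adj] at h' ⊢
    exact ⟨hxy, h'.2⟩
  · rw [Finset.card_image_of_injective _ Subtype.val_injective]; exact h.2

/-- Finite Ramsey theorem. -/
theorem aux_ramsey_exists (a b : ℕ) : ∃ R : ℕ, ∀ (V : Type) [Fintype V] (G : SimpleGraph V),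
    R ≤ Fintype.card V →
    (∃ s : Finset V, G.IsNClique a s) ∨ (∃ s : Finset V, Gᶜ.IsNClique b s) := by
  induction a generalizing b with
  | zero => exact ⟨0, fun V _ G _ => Or.inl ⟨∅, by simp⟩⟩
  | succ a iha =>
    induction b with
    | zero => exact ⟨0, fun V _ G _ => Or.inr ⟨∅, by simp⟩⟩
    | succ b ihb =>
      obtain ⟨R₁, h₁⟩ := iha (b + 1)
      obtain ⟨R₂, h₂⟩ := ihb
      refine ⟨R₁ + R₂ + 1, ?_⟩
      intro V _ G hcard
      classical
      have hne : Nonempty V := Fintype.card_pos_iff.mp (by omega)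
      obtain ⟨v⟩ := hne
      set A : Finset V := univ.filter (fun u => G.Adj v u) with hA
      set B : Finset V := univ.filter (fun u => u ≠ v ∧ ¬ G.Adj v u) with hB
      have hvA : v ∉ A := by simp [hA]
      have hvB : v ∉ B := by simp [hB]
      have hsum : A.card + B.card + 1 = Fintype.card V := by
        have hdisj : Disjoint A B := by
          rw [Finset.disjoint_left]
          intro x hx hx'
          simp [hA] at hx; simp [hB] at hx'
          exact hx'.2 hx
        have hunion : insert v (A ∪ B) = univ := by
          apply Finset.eq_univ_of_forall
          intro x
          by_cases hx : x = v
          · simp [hx]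
          · by_cases hadj : G.Adj v x
            · simp [Finset.mem_insert, Finset.mem_union, hA, hadj]
            · simp [Finset.mem_insert, Finset.mem_union, hB, hx, hadj]
        have := congrArg Finset.card hunion
        rw [Finset.card_insert_of_notMem (by simp [Finset.mem_union, hvA, hvB]),
          Finset.card_union_of_disjoint hdisj] at this
        simpa [Finset.card_univ] using this
      have hcases : R₁ ≤ A.card ∨ R₂ ≤ B.card := by omega
      rcases hcases with hAc | hBc
      · have hcardA : R₁ ≤ Fintype.card {x // x ∈ A} := by rwa [Fintype.card_coe]
        rcases h₁ {x // x ∈ A} (G.comap Subtype.val) hcardA with ⟨s, hs⟩ | ⟨s, hs⟩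
        · left
          refine ⟨insert v (s.image Subtype.val), (aux_comap_clique hs).insert ?_⟩
          intro x hx
          simp only [Finset.mem_image] at hx
          obtain ⟨x', hx', rfl⟩ := hx
          have hx2 := x'.2
          simp only [hA, Finset.mem_filter, Finset.mem_univ, true_and] at hx2
          exact hx2
        · right
          exact ⟨s.image Subtype.val, aux_comap_coclique hs⟩
      · have hcardB : R₂ ≤ Fintype.card {x // x ∈ B} := by rwa [Fintype.card_coe]
        rcases h₂ {x // x ∈ B} (G.comap Subtype.val) hcardB with ⟨s, hs⟩ | ⟨s, hs⟩
        · left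
          exact ⟨s.image Subtype.val, aux_comap_clique hs⟩
        · right
          refine ⟨insert v (s.image Subtype.val), (aux_comap_coclique hs).insert ?_⟩
          intro x hx
          simp only [Finset.mem_image] at hx
          obtain ⟨x', hx', rfl⟩ := hx
          have := x'.2
          simp only [hB, Finset.mem_filter, Finset.mem_univ, true_and] at this
          simp only [SimpleGraph.compl_adj]
          exact ⟨fun hh => this.1 hh.symm, fun hh => this.2 hh⟩

/-- The defining set of `ramseyNumber` is nonempty, hence its infimum is a member. -/
lemma aux_ramsey_mem (a b : ℕ) :
    (∀ m : ℕ, ramseyNumber a b ≤ m → ∀ G : SimpleGraph (Fin m),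
      (∃ s : Finset (Fin m), G.IsNClique a s) ∨ (∃ s : Finset (Fin m), Gᶜ.IsNClique b s)) := by
  have hSne : {R | ∀ m : ℕ, R ≤ m → ∀ G : SimpleGraph (Fin m),
      (∃ s : Finset (Fin m), G.IsNClique a s) ∨
      (∃ s : Finset (Fin m), Gᶜ.IsNClique b s)}.Nonempty := by
    obtain ⟨R₀, h₀⟩ := aux_ramsey_exists a b
    exact ⟨R₀, fun m hm G => h₀ (Fin m) G (by simpa using hm)⟩
  have hmem := Nat.sInf_mem hSne
  rw [ramseyNumber]
  exact hmem

/-- Extract a transitive chain from a tournament-like finset. -/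
lemma aux_trans_tournament {V : Type} (E : V → V → Prop) :
    ∀ (m : ℕ) (s : Finset V), 2 ^ m ≤ s.card →
    (∀ x ∈ s, ∀ y ∈ s, x ≠ y → E x y ∨ E y x) →
    ∃ l : List V, l.length = m + 1 ∧ l.Nodup ∧ (∀ x ∈ l, x ∈ s) ∧ l.Pairwise E := by
  intro m
  induction m with
  | zero =>
    intro s hcard _
    have hs : 0 < s.card := by simpa using hcard
    obtain ⟨x, hx⟩ := Finset.card_pos.mp hs
    exact ⟨[x], rfl, by simp, by simpa using hx, by simp⟩
  | succ m ih =>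
    intro s hcard htourn
    classical
    have hs : 0 < s.card := lt_of_lt_of_le (Nat.two_pow_pos (m+1)) hcard
    obtain ⟨x, hx⟩ := Finset.card_pos.mp hs
    set Out := (s.erase x).filter (fun y => E x y) with hOut
    set Inn := (s.erase x).filter (fun y => E y x) with hInn
    have hsub : s.erase x ⊆ Out ∪ Inn := by
      intro y hy
      have hyx : y ≠ x := Finset.ne_of_mem_erase hy
      have hys : y ∈ s := Finset.mem_of_mem_erase hy
      rcases htourn x hx y hys (fun h => hyx h.symm) with h | h
      · exact Finset.mem_union_left _ (Finset.mem_filter.mpr ⟨hy, h⟩)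
      · exact Finset.mem_union_right _ (Finset.mem_filter.mpr ⟨hy, h⟩)
    have hcard' : 2 ^ (m + 1) - 1 ≤ Out.card + Inn.card := by
      calc 2 ^ (m + 1) - 1 ≤ s.card - 1 := by omega
        _ = (s.erase x).card := (Finset.card_erase_of_mem hx).symm
        _ ≤ (Out ∪ Inn).card := Finset.card_le_card hsub
        _ ≤ Out.card + Inn.card := Finset.card_union_le _ _
    have hpow : 0 < 2 ^ m := Nat.two_pow_pos m
    have hcases : 2 ^ m ≤ Out.card ∨ 2 ^ m ≤ Inn.card := by
      rw [pow_succ] at hcard'; omega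
    rcases hcases with h | h
    · obtain ⟨l, hl1, hl2, hl3, hl4⟩ := ih Out h (by
        intro a ha b hb hab
        exact htourn a (Finset.mem_of_mem_erase (Finset.mem_of_mem_filter _ ha)) b
          (Finset.mem_of_mem_erase (Finset.mem_of_mem_filter _ hb)) hab)
      refine ⟨x :: l, by simp [hl1], ?_, ?_, ?_⟩
      · refine List.nodup_cons.mpr ⟨fun hxl => ?_, hl2⟩
        have := hl3 x hxl
        rw [hOut, Finset.mem_filter] at this
        exact (Finset.notMem_erase x s) this.1
      · intro y hy
        rcases List.mem_cons.mp hy with rfl | hy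
        · exact hx
        · exact Finset.mem_of_mem_erase (Finset.mem_of_mem_filter _ (hl3 y hy))
      · refine List.pairwise_cons.mpr ⟨fun y hy => ?_, hl4⟩
        have := hl3 y hy
        rw [hOut, Finset.mem_filter] at this
        exact this.2
    · obtain ⟨l, hl1, hl2, hl3, hl4⟩ := ih Inn h (by
        intro a ha b hb hab
        exact htourn a (Finset.mem_of_mem_erase (Finset.mem_of_mem_filter _ ha)) b
          (Finset.mem_of_mem_erase (Finset.mem_of_mem_filter _ hb)) hab)
      refine ⟨l ++ [x], by simp [hl1], ?_, ?_, ?_⟩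
      · rw [List.nodup_append]
        refine ⟨hl2, by simp, ?_⟩
        suffices h : x ∉ l from fun a ha b hb hab => h (by rw [← List.mem_singleton.mp hb, ← hab]; exact ha)
        intro hxl
        have := hl3 x hxl
        rw [hInn, Finset.mem_filter] at this
        exact (Finset.notMem_erase x s) this.1
      · intro y hy
        rcases List.mem_append.mp hy with hy | hy
        · exact Finset.mem_of_mem_erase (Finset.mem_of_mem_filter _ (hl3 y hy))
        · rw [List.mem_singleton.mp hy]; exact hx
      · rw [List.pairwise_append]
        refine ⟨hl4, by simp, ?_⟩
        intro y hy z hz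
        rw [List.mem_singleton.mp hz]
        have := hl3 y hy
        rw [hInn, Finset.mem_filter] at this
        exact this.2

/-- From a big underlying tournament, get an induced transitive tournament copy. -/
lemma aux_Tn_copy {V : Type} {n : ℕ} (hn : 1 ≤ n) (E : V → V → Prop)
    (hE : ∀ u v, E u v → ¬ E v u)
    (t : Finset V) (hcard : 2 ^ (n - 1) ≤ t.card)
    (htourn : ∀ x ∈ t, ∀ y ∈ t, x ≠ y → E x y ∨ E y x) :
    DigraphHasInducedCopy (TRel n) E := by
  obtain ⟨l, hl1, hl2, hl3, hl4⟩ := aux_trans_tournament E (n - 1) t hcard htourn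
  have hlen : l.length = n := by omega
  have hget := List.pairwise_iff_get.mp hl4
  have hcastlt : ∀ {i j : Fin n}, i < j →
      (Fin.cast hlen.symm i) < (Fin.cast hlen.symm j) := by
    intro i j hij
    rw [Fin.lt_def]
    exact hij
  refine ⟨fun i => l.get (Fin.cast hlen.symm i), ?_, ?_⟩
  · intro i j h
    have h2 := (List.nodup_iff_injective_get.mp hl2) h
    have h3 : (Fin.cast hlen.symm i).val = (Fin.cast hlen.symm j).val := congrArg Fin.val h2
    rw [Fin.coe_cast, Fin.coe_cast] at h3
    exact Fin.ext h3
  · intro i j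
    show E _ _ ↔ i < j
    constructor
    · intro h
      rcases lt_trichotomy i j with hij | rfl | hij
      · exact hij
      · exact absurd h (fun h' => hE _ _ h' h')
      · exact absurd (hget _ _ (hcastlt hij)) (hE _ _ h)
    · intro hij
      exact hget _ _ (hcastlt hij)

/-- `n` pairwise nonadjacent common neighbors of `w` give an induced star. -/
lemma aux_star_of_indep {V : Type} {n : ℕ} {G : SimpleGraph V}
    (hStar : ¬ HasInducedCopyG (StarG n) G) (w : V) (s : Finset V)
    (hcard : s.card = n) (hadj : ∀ x ∈ s, G.Adj w x)
    (hind : ∀ x ∈ s, ∀ y ∈ s, x ≠ y → ¬ G.Adj x y) : False := by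
  apply hStar
  have e := s.equivFin
  set g : Fin n → V := fun i => (e.symm (Fin.cast hcard.symm i) : V) with hg
  have hgmem : ∀ i, g i ∈ s := fun i => (e.symm (Fin.cast hcard.symm i)).2
  have hginj : Function.Injective g := by
    intro i j h
    have h2 : e.symm (Fin.cast hcard.symm i) = e.symm (Fin.cast hcard.symm j) :=
      Subtype.val_injective h
    have h3 := e.symm.injective h2
    have h4 : (Fin.cast hcard.symm i).val = (Fin.cast hcard.symm j).val := congrArg Fin.val h3
    rw [Fin.coe_cast, Fin.coe_cast] at h4
    exact Fin.ext h4
  have hwg : ∀ i, w ≠ g i := fun i h => G.irrefl (h ▸ hadj _ (hgmem i))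
  refine ⟨Sum.elim (fun _ => w) g, ?_, ?_⟩
  · intro x y h
    cases x with
    | inl a =>
      cases y with
      | inl b => cases a; cases b; rfl
      | inr j =>
        simp only [Sum.elim_inl, Sum.elim_inr] at h
        exact absurd h (hwg j)
    | inr i =>
      cases y with
      | inl b =>
        simp only [Sum.elim_inl, Sum.elim_inr] at h
        exact absurd h.symm (hwg i)
      | inr j =>
        simp only [Sum.elim_inr] at h
        rw [hginj h]
  · intro x y
    cases x with
    | inl a =>
      cases y with
      | inl b =>
        cases a; cases b
        simp only [Sum.elim_inl]
        rw [StarG, SimpleGraph.fromRel_adj]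
        constructor
        · intro h'
          exact absurd h' (G.irrefl)
        · rintro ⟨hne, -⟩
          exact absurd rfl hne
      | inr j =>
        simp only [Sum.elim_inl, Sum.elim_inr]
        rw [StarG, SimpleGraph.fromRel_adj]
        constructor
        · intro _
          exact ⟨by simp, Or.inl trivial⟩
        · intro _
          exact hadj _ (hgmem j)
    | inr i =>
      cases y with
      | inl b =>
        simp only [Sum.elim_inl, Sum.elim_inr]
        rw [StarG, SimpleGraph.fromRel_adj]
        constructor
        · intro _
          exact ⟨by simp, Or.inr trivial⟩
        · intro _
          exact (hadj _ (hgmem i)).symm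
      | inr j =>
        simp only [Sum.elim_inr]
        rw [StarG, SimpleGraph.fromRel_adj]
        constructor
        · intro hadj'
          by_cases hij : i = j
          · subst hij; exact absurd hadj' (G.irrefl)
          · exact absurd hadj' (hind _ (hgmem i) _ (hgmem j) (fun hh => hij (hginj hh)))
        · rintro ⟨-, h | h⟩ <;> exact h.elim

/-- Degree bound from Ramsey: the neighborhood of any vertex has fewer than `R` vertices. -/
lemma aux_deg_bound {V : Type} [Fintype V] [DecidableEq V] {n : ℕ} (hn : 2 ≤ n)
    (E : V → V → Prop) (hE : ∀ u v, E u v → ¬ E v u)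
    (hT : ¬ DigraphHasInducedCopy (TRel n) E)
    (hStar : ¬ HasInducedCopyG (StarG n) (SimpleGraph.fromRel E))
    (w : V) (N : Finset V) (hN : ∀ x ∈ N, (SimpleGraph.fromRel E).Adj w x) :
    N.card ≤ ramseyNumber (2 ^ (n - 1) - 1) n - 1 := by
  by_contra hc
  push_neg at hc
  set G := SimpleGraph.fromRel E with hG
  have hmem := aux_ramsey_mem (2 ^ (n - 1) - 1) n
  have hm : ramseyNumber (2 ^ (n - 1) - 1) n ≤ N.card := by omega
  set m := N.card with hmdef
  set emb : Fin m → V := fun i => (N.equivFin.symm i : V) with hemb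
  have hembN : ∀ i, emb i ∈ N := fun i => (N.equivFin.symm i).2
  have hembinj : Function.Injective emb := by
    intro i j h
    exact N.equivFin.symm.injective (Subtype.val_injective h)
  rcases hmem m hm (G.comap emb) with ⟨s, hs⟩ | ⟨s, hs⟩
  · -- clique branch: a transitive tournament appears
    apply hT
    have hwimg : w ∉ s.image emb := by
      intro hw
      obtain ⟨i, _, hi⟩ := Finset.mem_image.mp hw
      exact G.irrefl (hi ▸ hN _ (hembN i))
    have hpos : 1 ≤ 2 ^ (n - 1) := Nat.one_le_two_pow
    refine aux_Tn_copy (by omega) E hE (insert w (s.image emb)) ?_ ?_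
    · rw [Finset.card_insert_of_notMem hwimg,
        Finset.card_image_of_injective _ hembinj, hs.2]
      omega
    · intro x hx y hy hxy
      have hGadj : G.Adj x y := by
        rcases Finset.mem_insert.mp hx with hxw | hximg
        · rcases Finset.mem_insert.mp hy with hyw | hyimg
          · exact absurd (hxw.trans hyw.symm) hxy
          · obtain ⟨i, -, hi⟩ := Finset.mem_image.mp hyimg
            rw [hxw, ← hi]
            exact hN _ (hembN i)
        · rcases Finset.mem_insert.mp hy with hyw | hyimg
          · obtain ⟨i, -, hi⟩ := Finset.mem_image.mp hximg
            rw [hyw, ← hi]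
            exact (hN _ (hembN i)).symm
          · obtain ⟨i, hi', hi⟩ := Finset.mem_image.mp hximg
            obtain ⟨j, hj', hj⟩ := Finset.mem_image.mp hyimg
            have hij : i ≠ j := by
              rintro rfl
              rw [← hi, ← hj] at hxy
              exact hxy rfl
            have hadj := hs.1 hi' hj' hij
            simp only [SimpleGraph.comap_adj] at hadj
            rw [← hi, ← hj]
            exact hadj
      rw [hG, SimpleGraph.fromRel_adj] at hGadj
      tauto
  · -- coclique branch: an induced star appears
    refine aux_star_of_indep hStar w (s.image emb) ?_ ?_ ?_
    · rw [Finset.card_image_of_injective _ hembinj, hs.2]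
    · intro x hx
      obtain ⟨i, _, rfl⟩ := Finset.mem_image.mp hx
      exact hN _ (hembN i)
    · intro x hx y hy hxy hadj
      obtain ⟨i, hi, rfl⟩ := Finset.mem_image.mp hx
      obtain ⟨j, hj, rfl⟩ := Finset.mem_image.mp hy
      have hij : i ≠ j := fun hh => hxy (by rw [hh])
      have h' := hs.1 hi hj hij
      simp only [SimpleGraph.compl_adj, SimpleGraph.comap_adj] at h'
      exact h'.2 hadj

lemma aux_pow_lb (m : ℕ) : m + 6 ≤ 2 ^ (m + 3) := by
  induction m with
  | zero => norm_num
  | succ m ih =>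
    rw [show m + 1 + 3 = (m + 3) + 1 by omega, pow_succ]
    omega

/-- Lower bound for the Ramsey number. -/
lemma aux_ramsey_lb {n : ℕ} (hn : 3 ≤ n) : n + 1 ≤ ramseyNumber (2 ^ (n - 1) - 1) n := by
  classical
  have hmem := aux_ramsey_mem (2 ^ (n - 1) - 1) n
  by_contra hc
  push_neg at hc
  set W : SimpleGraph (Fin n) :=
    SimpleGraph.fromRel (fun i j => ¬ (i.val ≤ 1 ∧ j.val ≤ 1)) with hW
  have hWadj : ∀ i j : Fin n, W.Adj i j ↔ i ≠ j ∧ ¬ (i.val ≤ 1 ∧ j.val ≤ 1) := by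
    intro i j
    rw [hW, SimpleGraph.fromRel_adj]
    tauto
  rcases hmem n (by omega) W with ⟨s, hs⟩ | ⟨s, hs⟩
  · -- no big clique in W
    by_cases hn3 : n = 3
    · subst hn3
      have hcard : s.card = 3 := by simpa using hs.2
      have huniv : s = univ := Finset.eq_univ_of_card s (by simpa using hcard)
      have hne01 : (⟨0, by omega⟩ : Fin 3) ≠ ⟨1, by omega⟩ := by
        intro h
        simpa using congrArg Fin.val h
      have h01 : W.Adj ⟨0, by omega⟩ ⟨1, by omega⟩ :=
        hs.1 (by simp [huniv]) (by simp [huniv]) hne01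
      rw [hWadj] at h01
      exact h01.2 (by norm_num)
    · have hbig : n + 2 ≤ 2 ^ (n - 1) := by
        have h1 := aux_pow_lb (n - 4)
        rw [show n - 4 + 3 = n - 1 by omega] at h1
        omega
      have hle : s.card ≤ n := le_trans (Finset.card_le_univ s) (by simp)
      rw [hs.2] at hle
      omega
  · -- no independent set of size n in W
    have huniv : s = univ := Finset.eq_univ_of_card s (by simpa using hs.2)
    have hne12 : (⟨1, by omega⟩ : Fin n) ≠ ⟨2, by omega⟩ := by
      intro h
      simpa using congrArg Fin.val h
    have h12 : Wᶜ.Adj ⟨1, by omega⟩ ⟨2, by omega⟩ :=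
      hs.1 (by simp [huniv]) (by simp [huniv]) hne12
    rw [SimpleGraph.compl_adj] at h12
    apply h12.2
    rw [hWadj]
    refine ⟨h12.1, by norm_num⟩

/-- cpNum is at most the number of vertices (partition into singletons). -/
lemma aux_cp_le_card {V : Type} [Fintype V] (E : V → V → Prop) :
    cpNum E ≤ Fintype.card V := by
  classical
  apply Nat.sInf_le
  have hinj : Function.Injective (fun v : V => [v]) := by
    intro a b h
    simpa using h
  refine ⟨Finset.univ.image (fun v => [v]), ?_, ?_, ?_, ?_⟩
  · rw [Finset.card_image_of_injective _ hinj, Finset.card_univ]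
  · intro l hl
    obtain ⟨v, -, rfl⟩ := Finset.mem_image.mp hl
    exact Or.inr ⟨List.cons_ne_nil v [], by simp, List.nodup_singleton v, List.isChain_singleton v⟩
  · intro v
    exact ⟨[v], Finset.mem_image.mpr ⟨v, Finset.mem_univ v, rfl⟩, by simp⟩
  · intro l hl l' hl' hne v hv hv'
    obtain ⟨a, -, rfl⟩ := Finset.mem_image.mp hl
    obtain ⟨b, -, rfl⟩ := Finset.mem_image.mp hl'
    simp only [List.mem_singleton] at hv hv'
    subst hv; subst hv'
    exact hne rfl

lemma aux_exists_walks_getVert {V : Type} {G : SimpleGraph V} {u w : V} (p : G.Walk u w)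
    (i : ℕ) :
    ∃ (r : G.Walk u (p.getVert i)) (r' : G.Walk (p.getVert i) w),
      r.length ≤ i ∧ r'.length ≤ p.length - i := by
  induction p generalizing i with
  | nil => exact ⟨SimpleGraph.Walk.nil, SimpleGraph.Walk.nil, by simp, by simp⟩
  | cons h q ih =>
    cases i with
    | zero => exact ⟨SimpleGraph.Walk.nil, SimpleGraph.Walk.cons h q, le_of_eq rfl, le_of_eq rfl⟩
    | succ i =>
      obtain ⟨r, r', h1, h2⟩ := ih i
      refine ⟨SimpleGraph.Walk.cons h r, r', ?_, ?_⟩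
      · simpa using h1
      · simpa [SimpleGraph.Walk.length_cons, Nat.succ_sub_succ] using h2

lemma aux_dist_getVert {V : Type} {G : SimpleGraph V} (hconn : G.Connected) {u w : V}
    (p : G.Walk u w) (hp : p.length = G.dist u w) {i : ℕ} (hi : i ≤ p.length) :
    G.dist u (p.getVert i) = i := by
  obtain ⟨r, r', h1, h2⟩ := aux_exists_walks_getVert p i
  have hle : G.dist u (p.getVert i) ≤ i := le_trans (SimpleGraph.dist_le r) h1
  have h3 : G.dist (p.getVert i) w ≤ p.length - i := le_trans (SimpleGraph.dist_le r') h2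
  have h4 := hconn.dist_triangle (u := u) (v := p.getVert i) (w := w)
  omega

lemma aux_dist_le_of_path_free {V : Type} {G : SimpleGraph V} (hconn : G.Connected) {n : ℕ}
    (hn : 2 ≤ n) (hPath : ¬ HasInducedCopyG (PathG n) G) (u w : V) :
    G.dist u w ≤ n - 2 := by
  by_contra hlt
  push_neg at hlt
  obtain ⟨p, hp⟩ := hconn.exists_walk_length_eq_dist u w
  have hlen : n - 1 ≤ p.length := by omega
  apply hPath
  have hdists : ∀ j : Fin n, G.dist u (p.getVert j.val) = j.val := fun j =>
    aux_dist_getVert hconn p hp (by have := j.2; omega)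
  refine ⟨fun j => p.getVert j.val, ?_, ?_⟩
  · intro i j h
    apply Fin.ext
    rw [← hdists i, ← hdists j]
    exact congrArg (G.dist u) h
  · intro i j
    rw [PathG, SimpleGraph.fromRel_adj]
    have hvalne : i ≠ j → i.val ≠ j.val := fun h h' => h (Fin.ext h')
    constructor
    · intro hadj
      have hne : i ≠ j := by
        rintro rfl
        exact G.irrefl hadj
      have h1 : G.dist (p.getVert i.val) (p.getVert j.val) = 1 :=
        SimpleGraph.dist_eq_one_iff_adj.mpr hadj
      have h1' : G.dist (p.getVert j.val) (p.getVert i.val) = 1 := by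
        rw [SimpleGraph.dist_comm]; exact h1
      have t1 := hconn.dist_triangle (u := u) (v := p.getVert i.val) (w := p.getVert j.val)
      have t2 := hconn.dist_triangle (u := u) (v := p.getVert j.val) (w := p.getVert i.val)
      have hi := hdists i; have hj := hdists j
      have := hvalne hne
      exact ⟨hne, by omega⟩
    · rintro ⟨hne, hor⟩
      have hjlt := j.2
      have hilt := i.2
      rcases hor with hij | hij
      · have hadj := p.adj_getVert_succ (i := i.val) (by omega)
        rwa [hij] at hadj
      · have hadj := p.adj_getVert_succ (i := j.val) (by omega)
        rw [hij] at hadj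
        exact hadj.symm

lemma aux_penultimate {V : Type} {G : SimpleGraph V} (hconn : G.Connected) (v u : V) {i : ℕ}
    (hd : G.dist v u = i + 1) : ∃ w, G.Adj w u ∧ G.dist v w = i := by
  obtain ⟨p, hp⟩ := hconn.exists_walk_length_eq_dist v u
  refine ⟨p.getVert i, ?_, aux_dist_getVert hconn p hp (by omega)⟩
  have hadj := p.adj_getVert_succ (i := i) (by omega)
  rw [show i + 1 = p.length by omega, p.getVert_length] at hadj
  exact hadj

lemma aux_layer_step {V : Type} [Fintype V] [DecidableEq V] {G : SimpleGraph V}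
    [DecidableRel G.Adj] (hconn : G.Connected) (v : V) {Δ : ℕ}
    (hdeg : ∀ w : V, (univ.filter (fun x => G.Adj w x)).card ≤ Δ) (i : ℕ) (hi : 1 ≤ i) :
    (univ.filter (fun u => G.dist v u = i + 1)).card ≤
      (Δ - 1) * (univ.filter (fun u => G.dist v u = i)).card := by
  set L1 := univ.filter (fun u => G.dist v u = i) with hL1
  set L2 := univ.filter (fun u => G.dist v u = i + 1) with hL2
  have hsub : L2 ⊆ L1.biUnion (fun w => (univ.filter (fun x => G.Adj w x)) ∩ L2) := by
    intro u hu
    have hd : G.dist v u = i + 1 := (mem_filter.mp hu).2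
    obtain ⟨w, hadj, hdw⟩ := aux_penultimate hconn v u hd
    refine Finset.mem_biUnion.mpr ⟨w, ?_, Finset.mem_inter.mpr ⟨by simp [hadj], hu⟩⟩
    rw [hL1, mem_filter]
    exact ⟨mem_univ w, hdw⟩
  calc L2.card ≤ (L1.biUnion (fun w => (univ.filter (fun x => G.Adj w x)) ∩ L2)).card :=
        Finset.card_le_card hsub
    _ ≤ ∑ w ∈ L1, ((univ.filter (fun x => G.Adj w x)) ∩ L2).card := Finset.card_biUnion_le
    _ ≤ ∑ _w ∈ L1, (Δ - 1) := by
        apply Finset.sum_le_sum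
        intro w hw
        have hdw : G.dist v w = i := (mem_filter.mp hw).2
        obtain ⟨j, hj⟩ : ∃ j, i = j + 1 := ⟨i - 1, by omega⟩
        obtain ⟨w', hadj', hdw'⟩ := aux_penultimate hconn v w (by rw [hdw, hj])
        have hw'mem : w' ∈ univ.filter (fun x => G.Adj w x) := by simp [hadj'.symm]
        have hsub2 : (univ.filter (fun x => G.Adj w x)) ∩ L2 ⊆
            (univ.filter (fun x => G.Adj w x)).erase w' := by
          intro x hxmem
          rw [Finset.mem_inter] at hxmem
          apply Finset.mem_erase.mpr
          refine ⟨?_, hxmem.1⟩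
          intro hxw
          have := (mem_filter.mp hxmem.2).2
          rw [hxw, hdw'] at this
          omega
        calc ((univ.filter (fun x => G.Adj w x)) ∩ L2).card
            ≤ ((univ.filter (fun x => G.Adj w x)).erase w').card := Finset.card_le_card hsub2
          _ = (univ.filter (fun x => G.Adj w x)).card - 1 := Finset.card_erase_of_mem hw'mem
          _ ≤ Δ - 1 := by have := hdeg w; omega
    _ = (Δ - 1) * L1.card := by rw [Finset.sum_const, smul_eq_mul, mul_comm]

lemma aux_geom_le (q j : ℕ) : ∑ i ∈ range (j + 2), q ^ i ≤ (q + 1) ^ (j + 1) := by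
  induction j with
  | zero =>
    simp only [Finset.sum_range_succ, Finset.sum_range_zero, pow_zero, pow_one, zero_add]
    omega
  | succ j ih =>
    rw [Finset.sum_range_succ]
    have h1 : q ^ (j + 2) ≤ q * (q + 1) ^ (j + 1) := by
      rw [pow_succ']
      exact Nat.mul_le_mul_left q (Nat.pow_le_pow_left (by omega) _)
    calc (∑ i ∈ range (j + 2), q ^ i) + q ^ (j + 2)
        ≤ (q + 1) ^ (j + 1) + q * (q + 1) ^ (j + 1) := Nat.add_le_add ih h1
      _ = (q + 1) ^ (j + 2) := by ring

lemma aux_caseB_num (D K : ℕ) :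
    1 + (D + 2) + ((D + 2) * (D + 1) - 1) * ∑ j ∈ range (K + 1), (D + 1) ^ j
      ≤ (D + 2) ^ (K + 2) := by
  induction K with
  | zero =>
    have e1 : (D + 2) * (D + 1) = D * D + 3 * D + 2 := by ring
    have e2 : (D + 2) ^ 2 = D * D + 4 * D + 4 := by ring
    simp only [zero_add, Finset.sum_range_one, pow_zero, mul_one]
    rw [e1, e2]
    generalize D * D = P
    omega
  | succ K ih =>
    rw [Finset.sum_range_succ, mul_add, ← add_assoc]
    have h1 : ((D + 2) * (D + 1) - 1) * (D + 1) ^ (K + 1)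
        ≤ ((D + 2) * (D + 1)) * (D + 2) ^ (K + 1) :=
      Nat.mul_le_mul (by omega) (Nat.pow_le_pow_left (by omega) _)
    refine le_trans (Nat.add_le_add ih h1) (le_of_eq ?_)
    ring

end AuxLemmas
/-- Every weakly connected `T_n`-free digraph `D` (`n ≥ 2`) whose
underlying graph is `{K_{1,n}, P_n}`-free has at most `(R(2^{n−1}−1, n) − 1)^{n−2}`
vertices, and consequently `cp(D) ≤ (R(2^{n−1}−1, n) − 1)^{n−2}`. -/
theorem card_and_cp_le_of_Tn_free (n : ℕ) (hn : 2 ≤ n)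
    (V : Type) [Fintype V] (E : V → V → Prop)
    (hE : ∀ u v : V, E u v → ¬ E v u)
    (hconn : (SimpleGraph.fromRel E).Connected)
    (hT : ¬ DigraphHasInducedCopy (TRel n) E)
    (hStar : ¬ HasInducedCopyG (StarG n) (SimpleGraph.fromRel E))
    (hPath : ¬ HasInducedCopyG (PathG n) (SimpleGraph.fromRel E)) :
    Fintype.card V ≤ (ramseyNumber (2 ^ (n - 1) - 1) n - 1) ^ (n - 2) ∧
    cpNum E ≤ (ramseyNumber (2 ^ (n - 1) - 1) n - 1) ^ (n - 2) := by
  classical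
  set G := SimpleGraph.fromRel E with hG
  set R := ramseyNumber (2 ^ (n - 1) - 1) n with hR
  have hdeg : ∀ w : V, (univ.filter (fun x => G.Adj w x)).card ≤ R - 1 := by
    intro w
    exact aux_deg_bound hn E hE hT hStar w _ (fun x hx => (mem_filter.mp hx).2)
  have hdist : ∀ u w : V, G.dist u w ≤ n - 2 := fun u w =>
    aux_dist_le_of_path_free hconn hn hPath u w
  suffices hmain : Fintype.card V ≤ (R - 1) ^ (n - 2) by
    exact ⟨hmain, le_trans (aux_cp_le_card E) hmain⟩
  by_cases hn2 : n = 2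
  · subst hn2
    have hsub : ∀ a b : V, a = b := by
      intro a b
      have h := hdist a b
      have h0 : G.dist a b = 0 := by omega
      rcases (SimpleGraph.dist_eq_zero_iff_eq_or_not_reachable).mp h0 with h | h
      · exact h
      · exact absurd (hconn.preconnected a b) h
    have hc1 : Fintype.card V ≤ 1 := Fintype.card_le_one_iff.mpr hsub
    simpa using hc1
  · have hn3' : 3 ≤ n := by omega
    have hRlb : n + 1 ≤ R := aux_ramsey_lb hn3'
    set Δ := R - 1 with hΔ
    have hΔn : n ≤ Δ := by omega
    by_cases hn3 : n = 3
    · subst hn3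
      have hcomplete : ∀ x y : V, x ≠ y → G.Adj x y := by
        intro x y hxy
        have h1 := hdist x y
        have h2 : 0 < G.dist x y := hconn.pos_dist_of_ne hxy
        have h3 : G.dist x y = 1 := by omega
        exact SimpleGraph.dist_eq_one_iff_adj.mp h3
      have hcard3 : Fintype.card V ≤ 3 := by
        by_contra hc
        push_neg at hc
        obtain ⟨s, -, hscard⟩ := Finset.exists_subset_card_eq (s := (univ : Finset V)) (n := 4)
          (by rw [Finset.card_univ]; omega)
        apply hT
        refine aux_Tn_copy (by norm_num) E hE s (by rw [hscard]; norm_num) ?_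
        intro x hx y hy hxy
        have hxyadj := hcomplete x y hxy
        rw [hG, SimpleGraph.fromRel_adj] at hxyadj
        tauto
      calc Fintype.card V ≤ 3 := hcard3
        _ ≤ Δ ^ (3 - 2) := by simpa using le_trans (by norm_num) hΔn
    · -- main case : n ≥ 4
      have hn4 : 4 ≤ n := by omega
      obtain ⟨D, hD⟩ : ∃ D, Δ = D + 2 := ⟨Δ - 2, by omega⟩
      obtain ⟨K, hK⟩ : ∃ K, n = K + 4 := ⟨n - 4, by omega⟩
      set L : V → ℕ → Finset V := fun v i => univ.filter (fun u => G.dist v u = i) with hLdef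
      have hmemL : ∀ v u i, u ∈ L v i ↔ G.dist v u = i := by
        intro v u i
        rw [hLdef]
        simp
      have hcover : ∀ v : V, Fintype.card V ≤ ∑ i ∈ range (n - 2 + 1), (L v i).card := by
        intro v
        rw [← Finset.card_univ]
        refine le_trans (Finset.card_le_card ?_) Finset.card_biUnion_le
        intro u _
        refine Finset.mem_biUnion.mpr ⟨G.dist v u, ?_, (hmemL v u _).mpr rfl⟩
        rw [Finset.mem_range]
        have := hdist v u
        omega
      have hL0 : ∀ v, (L v 0).card ≤ 1 := by
        intro v
        refine Finset.card_le_one.mpr (fun a ha b hb => ?_)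
        have ha' : G.dist v a = 0 := (hmemL v a 0).mp ha
        have hb' : G.dist v b = 0 := (hmemL v b 0).mp hb
        rcases (SimpleGraph.dist_eq_zero_iff_eq_or_not_reachable).mp ha' with h | h
        · rcases (SimpleGraph.dist_eq_zero_iff_eq_or_not_reachable).mp hb' with h2 | h2
          · rw [← h, ← h2]
          · exact absurd (hconn.preconnected v b) h2
        · exact absurd (hconn.preconnected v a) h
      have hL1sub : ∀ v, L v 1 ⊆ univ.filter (fun x => G.Adj v x) := by
        intro v u hu
        rw [mem_filter]
        exact ⟨mem_univ u, SimpleGraph.dist_eq_one_iff_adj.mp ((hmemL v u 1).mp hu)⟩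
      have hstep : ∀ v i, 1 ≤ i → (L v (i + 1)).card ≤ (Δ - 1) * (L v i).card := by
        intro v i hi
        exact aux_layer_step hconn v hdeg i hi
      by_cases hA : ∃ v : V, (univ.filter (fun x => G.Adj v x)).card ≤ Δ - 1
      · obtain ⟨v, hv⟩ := hA
        have hLb : ∀ i, (L v i).card ≤ (Δ - 1) ^ i := by
          intro i
          induction i with
          | zero => simpa using hL0 v
          | succ j ihj =>
            cases j with
            | zero =>
              calc (L v 1).card ≤ (univ.filter (fun x => G.Adj v x)).card :=
                    Finset.card_le_card (hL1sub v)
                _ ≤ (Δ - 1) ^ 1 := by simpa using hv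
            | succ j' =>
              calc (L v (j' + 1 + 1)).card ≤ (Δ - 1) * (L v (j' + 1)).card :=
                    hstep v (j' + 1) (by omega)
                _ ≤ (Δ - 1) * (Δ - 1) ^ (j' + 1) := Nat.mul_le_mul_left _ ihj
                _ = (Δ - 1) ^ (j' + 1 + 1) := by rw [← pow_succ']
        calc Fintype.card V ≤ ∑ i ∈ range (n - 2 + 1), (L v i).card := hcover v
          _ ≤ ∑ i ∈ range (n - 2 + 1), (Δ - 1) ^ i := Finset.sum_le_sum (fun i _ => hLb i)
          _ ≤ Δ ^ (n - 2) := by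
              have hgeom := aux_geom_le (Δ - 1) (K + 1)
              have hΔ1 : Δ - 1 + 1 = Δ := by omega
              rw [hΔ1] at hgeom
              have hr : n - 2 + 1 = (K + 1) + 2 := by omega
              have hr2 : n - 2 = (K + 1) + 1 := by omega
              rw [hr, hr2]
              exact hgeom
      · push_neg at hA
        obtain ⟨v⟩ := hconn.nonempty
        have hNv : Δ ≤ (univ.filter (fun x => G.Adj v x)).card := by
          have := hA v
          omega
        have hedge : ∃ a ∈ univ.filter (fun x => G.Adj v x),
            ∃ b ∈ univ.filter (fun x => G.Adj v x), a ≠ b ∧ G.Adj a b := by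
          by_contra hno
          push_neg at hno
          obtain ⟨s, hssub, hscard⟩ := Finset.exists_subset_card_eq
            (s := univ.filter (fun x => G.Adj v x)) (n := n) (by omega)
          exact aux_star_of_indep hStar v s hscard
            (fun x hx => (mem_filter.mp (hssub hx)).2)
            (fun x hx y hy hxy => hno x (hssub hx) y (hssub hy) hxy)
        obtain ⟨a, haN, b, hbN, hab, hadj⟩ := hedge
        have haAdj : G.Adj v a := (mem_filter.mp haN).2
        have hbAdj : G.Adj v b := (mem_filter.mp hbN).2
        have haL1 : a ∈ L v 1 := (hmemL v a 1).mpr (SimpleGraph.dist_eq_one_iff_adj.mpr haAdj)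
        have hbdist : G.dist v b = 1 := SimpleGraph.dist_eq_one_iff_adj.mpr hbAdj
        -- the refined bound on the second layer
        have hL2 : (L v 2).card ≤ Δ * (Δ - 1) - 1 := by
          have hsub2 : L v 2 ⊆ (L v 1).biUnion
              (fun w => (univ.filter (fun x => G.Adj w x)) ∩ L v 2) := by
            intro u hu
            obtain ⟨w, hwadj, hwdist⟩ := aux_penultimate hconn v u ((hmemL v u 2).mp hu)
            refine Finset.mem_biUnion.mpr ⟨w, (hmemL v w 1).mpr hwdist,
              Finset.mem_inter.mpr ⟨by simp [hwadj], hu⟩⟩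
          have hbound1 : ∀ w ∈ L v 1, ((univ.filter (fun x => G.Adj w x)) ∩ L v 2).card ≤ Δ - 1 := by
            intro w hw
            have hwadj : G.Adj v w := SimpleGraph.dist_eq_one_iff_adj.mp ((hmemL v w 1).mp hw)
            have hvmem : v ∈ univ.filter (fun x => G.Adj w x) := by simp [hwadj.symm]
            have : (univ.filter (fun x => G.Adj w x)) ∩ L v 2 ⊆
                (univ.filter (fun x => G.Adj w x)).erase v := by
              intro x hx
              rw [Finset.mem_inter] at hx
              refine Finset.mem_erase.mpr ⟨?_, hx.1⟩
              intro hxv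
              have := (hmemL v x 2).mp hx.2
              rw [hxv] at this
              simp [SimpleGraph.dist_self] at this
            calc ((univ.filter (fun x => G.Adj w x)) ∩ L v 2).card
                ≤ ((univ.filter (fun x => G.Adj w x)).erase v).card := Finset.card_le_card this
              _ = (univ.filter (fun x => G.Adj w x)).card - 1 := Finset.card_erase_of_mem hvmem
              _ ≤ Δ - 1 := by have := hdeg w; omega
          have hbounda : ((univ.filter (fun x => G.Adj a x)) ∩ L v 2).card ≤ Δ - 2 := by
            have hvmem : v ∈ univ.filter (fun x => G.Adj a x) := by simp [haAdj.symm]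
            have hbmem : b ∈ (univ.filter (fun x => G.Adj a x)).erase v := by
              refine Finset.mem_erase.mpr ⟨?_, by simp [hadj]⟩
              intro hbv
              rw [hbv] at hbdist
              simp [SimpleGraph.dist_self] at hbdist
            have hsub3 : (univ.filter (fun x => G.Adj a x)) ∩ L v 2 ⊆
                ((univ.filter (fun x => G.Adj a x)).erase v).erase b := by
              intro x hx
              rw [Finset.mem_inter] at hx
              have hxd := (hmemL v x 2).mp hx.2
              refine Finset.mem_erase.mpr ⟨?_, Finset.mem_erase.mpr ⟨?_, hx.1⟩⟩
              · intro hxb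
                rw [hxb, hbdist] at hxd
                omega
              · intro hxv
                rw [hxv] at hxd
                simp [SimpleGraph.dist_self] at hxd
            calc ((univ.filter (fun x => G.Adj a x)) ∩ L v 2).card
                ≤ (((univ.filter (fun x => G.Adj a x)).erase v).erase b).card :=
                  Finset.card_le_card hsub3
              _ = ((univ.filter (fun x => G.Adj a x)).erase v).card - 1 :=
                  Finset.card_erase_of_mem hbmem
              _ = (univ.filter (fun x => G.Adj a x)).card - 1 - 1 := by
                  rw [Finset.card_erase_of_mem hvmem]
              _ ≤ Δ - 2 := by have := hdeg a; omega
          have hL1card : (L v 1).card ≤ Δ :=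
            le_trans (Finset.card_le_card (hL1sub v)) (hdeg v)
          have hsum2 : ∑ w ∈ L v 1, ((univ.filter (fun x => G.Adj w x)) ∩ L v 2).card
              ≤ Δ * (Δ - 1) - 1 := by
            rw [← Finset.add_sum_erase _ _ haL1]
            have hrest : ∑ w ∈ (L v 1).erase a,
                ((univ.filter (fun x => G.Adj w x)) ∩ L v 2).card
                ≤ ((L v 1).card - 1) * (Δ - 1) := by
              calc ∑ w ∈ (L v 1).erase a, ((univ.filter (fun x => G.Adj w x)) ∩ L v 2).card
                  ≤ ∑ _w ∈ (L v 1).erase a, (Δ - 1) :=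
                    Finset.sum_le_sum (fun w hw => hbound1 w (Finset.mem_of_mem_erase hw))
                _ = ((L v 1).card - 1) * (Δ - 1) := by
                    rw [Finset.sum_const, smul_eq_mul, Finset.card_erase_of_mem haL1]
            have h5 : ((L v 1).card - 1) * (Δ - 1) ≤ (Δ - 1) * (Δ - 1) :=
              Nat.mul_le_mul_right _ (by omega)
            have h6 : Δ - 2 + (Δ - 1) * (Δ - 1) ≤ Δ * (Δ - 1) - 1 := by
              rw [hD]
              have e1 : (D + 2 - 1) * (D + 2 - 1) = D * D + 2 * D + 1 := by
                rw [show D + 2 - 1 = D + 1 by omega]; ring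
              have e2 : (D + 2) * (D + 2 - 1) = D * D + 3 * D + 2 := by
                rw [show D + 2 - 1 = D + 1 by omega]; ring
              rw [e1, e2]
              generalize D * D = P
              omega
            omega
          calc (L v 2).card
              ≤ ((L v 1).biUnion (fun w => (univ.filter (fun x => G.Adj w x)) ∩ L v 2)).card :=
                Finset.card_le_card hsub2
            _ ≤ ∑ w ∈ L v 1, ((univ.filter (fun x => G.Adj w x)) ∩ L v 2).card :=
                Finset.card_biUnion_le
            _ ≤ Δ * (Δ - 1) - 1 := hsum2
        have hLb2 : ∀ j, (L v (j + 2)).card ≤ (Δ * (Δ - 1) - 1) * (Δ - 1) ^ j := by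
          intro j
          induction j with
          | zero => simpa using hL2
          | succ j ihj =>
            calc (L v (j + 2 + 1)).card ≤ (Δ - 1) * (L v (j + 2)).card :=
                  hstep v (j + 2) (by omega)
              _ ≤ (Δ - 1) * ((Δ * (Δ - 1) - 1) * (Δ - 1) ^ j) := Nat.mul_le_mul_left _ ihj
              _ = (Δ * (Δ - 1) - 1) * (Δ - 1) ^ (j + 1) := by
                  rw [mul_left_comm, ← pow_succ']
        have hL1card : (L v 1).card ≤ Δ := le_trans (Finset.card_le_card (hL1sub v)) (hdeg v)
        have hsumfin : Fintype.card V ≤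
            1 + Δ + ∑ j ∈ range (K + 1), (Δ * (Δ - 1) - 1) * (Δ - 1) ^ j := by
          have h0 := hcover v
          have hr : n - 2 + 1 = (K + 1) + 1 + 1 := by omega
          rw [hr, Finset.sum_range_succ', Finset.sum_range_succ'] at h0
          have hterms := Finset.sum_le_sum (fun j (_ : j ∈ range (K + 1)) => hLb2 j)
          have hL0v := hL0 v
          have hbr1 : (∑ k ∈ range (K + 1), (L v (k + 1 + 1)).card)
              = ∑ j ∈ range (K + 1), (L v (j + 2)).card := rfl
          have hbr2 : (L v (0 + 1)).card = (L v 1).card := rfl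
          omega
        have hMq : Δ - 1 = D + 1 := by omega
        calc Fintype.card V ≤
            1 + Δ + ∑ j ∈ range (K + 1), (Δ * (Δ - 1) - 1) * (Δ - 1) ^ j := hsumfin
          _ = 1 + (D + 2) + ((D + 2) * (D + 1) - 1) * ∑ j ∈ range (K + 1), (D + 1) ^ j := by
              rw [← Finset.mul_sum]
              simp only [hMq, hD, show D + 2 - 1 = D + 1 by omega]
          _ ≤ (D + 2) ^ (K + 2) := aux_caseB_num D K
          _ = Δ ^ (n - 2) := by rw [hD, show n - 2 = K + 2 by omega]
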